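/- Under instrument exogeneity, exclusion, monotonicity and a nonzero first stage for instrument values z > z', the Wald estimand (E[Y|Z=z] - E[Y|Z=z']) / (P(D=1|Z=z) - P(D=1|Z=z')) equals the local average treatment effect E[Y(1) - Y(0) | D(z)=1, D(z')=0]. -/

import Mathlib

open MeasureTheory ProbabilityTheory

section Aux
variable {Ω : Type*} [MeasurableSpace Ω] {μ : Measure Ω} [IsProbabilityMeasure μ]

lemma late_integral_cond_of_indep {A : Set Ω} (hA : MeasurableSet A) (hA0 : μ A ≠ 0)
    {g : Ω → ℝ} (hg : AEStronglyMeasurable g μ)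
    (hind : IndepFun (A.indicator (fun _ => (1:ℝ))) g μ) :
    ∫ ω, g ω ∂(μ[|A]) = ∫ ω, g ω ∂μ := by
  have hA1 : μ A ≠ ⊤ := measure_ne_top μ A
  rw [ProbabilityTheory.cond, integral_smul_measure]
  have h1 : ∫ ω in A, g ω ∂μ = ∫ ω, (A.indicator (fun _ => (1:ℝ)) * g) ω ∂μ := by
    rw [← integral_indicator hA]
    congr 1; funext ω
    by_cases h : ω ∈ A <;> simp [Set.indicator, h]
  have h2 := hind.integral_mul_eq_mul_integral ((integrable_const (1:ℝ)).indicator hA).aestronglyMeasurable hg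
  rw [h1, h2]
  have h3 : ∫ ω, A.indicator (fun _ => (1:ℝ)) ω ∂μ = (μ A).toReal := by
    rw [integral_indicator hA]; simp; rfl
  rw [h3, ENNReal.toReal_inv, smul_eq_mul, ← mul_assoc,
    inv_mul_cancel₀ (by simp [ENNReal.toReal_ne_zero, hA0, hA1]), one_mul]

end Aux

/-- LATE theorem: under exogeneity, exclusion, monotonicity and a nonzero first
stage, the Wald estimand equals the local average treatment effect on compliers. -/
theorem wald_equals_late
    {Ω : Type*} [MeasurableSpace Ω] (μ : Measure Ω) [IsProbabilityMeasure μ]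
    {ι : Type*} [MeasurableSpace ι] [MeasurableSingletonClass ι]
    (Z : Ω → ι) (z z' : ι)
    (Dz Dz' Y1 Y0 D Y : Ω → ℝ)
    (hZ : Measurable Z) (hDz : Measurable Dz) (hDz' : Measurable Dz')
    (hY1 : Integrable Y1 μ) (hY0 : Integrable Y0 μ)
    (hbin : ∀ ω, (Dz ω = 0 ∨ Dz ω = 1) ∧ (Dz' ω = 0 ∨ Dz' ω = 1))
    -- observed treatment is the potential treatment at the realized instrument value
    (hDlink : ∀ ω, Z ω = z → D ω = Dz ω)
    (hDlink' : ∀ ω, Z ω = z' → D ω = Dz' ω)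
    -- observed outcome, with exclusion built in: Y(d) does not depend on Z
    (hYobs : ∀ ω, Y ω = D ω * Y1 ω + (1 - D ω) * Y0 ω)
    -- exogeneity: Z independent of (D(z), D(z'), Y(1), Y(0))
    (hexo : IndepFun Z (fun ω => (Dz ω, Dz' ω, Y1 ω, Y0 ω)) μ)
    -- monotonicity: P(D(z) ≥ D(z')) = 1
    (hmono : ∀ᵐ ω ∂μ, Dz' ω ≤ Dz ω)
    (hz : 0 < μ (Z ⁻¹' {z})) (hz' : 0 < μ (Z ⁻¹' {z'}))
    -- first stage: E[D | Z = z] ≠ E[D | Z = z']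
    (hfs : ∫ ω, D ω ∂(μ[|Z ⁻¹' {z}]) ≠ ∫ ω, D ω ∂(μ[|Z ⁻¹' {z'}])) :
    (∫ ω, Y ω ∂(μ[|Z ⁻¹' {z}]) - ∫ ω, Y ω ∂(μ[|Z ⁻¹' {z'}])) /
      ((μ[|Z ⁻¹' {z}] {ω | D ω = 1}).toReal - (μ[|Z ⁻¹' {z'}] {ω | D ω = 1}).toReal)
      = ∫ ω, Y1 ω - Y0 ω ∂(μ[|{ω | Dz ω = 1 ∧ Dz' ω = 0}]) := by
  classical
  set A : Set Ω := Z ⁻¹' {z} with hAdef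
  set A' : Set Ω := Z ⁻¹' {z'} with hA'def
  set C : Set Ω := {ω | Dz ω = 1 ∧ Dz' ω = 0} with hCdef
  have hAm : MeasurableSet A := hZ (measurableSet_singleton z)
  have hA'm : MeasurableSet A' := hZ (measurableSet_singleton z')
  have hCm : MeasurableSet C := by
    have : C = Dz ⁻¹' {1} ∩ Dz' ⁻¹' {0} := by ext ω; simp [hCdef]
    rw [this]
    exact (hDz (measurableSet_singleton 1)).inter (hDz' (measurableSet_singleton 0))
  have hA0 : μ A ≠ 0 := hz.ne'
  have hA'0 : μ A' ≠ 0 := hz'.ne'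
  -- independence of the indicator of A (resp. A') from any measurable functional of W
  set W : Ω → ℝ × ℝ × ℝ × ℝ := fun ω => (Dz ω, Dz' ω, Y1 ω, Y0 ω) with hWdef
  have hindic : ∀ v : ι, (fun ω => (({v} : Set ι).indicator (fun _ => (1:ℝ))) (Z ω))
      = (Z ⁻¹' {v}).indicator (fun _ => (1:ℝ)) := by
    intro v; funext ω
    by_cases h : Z ω = v <;> simp [Set.indicator, h]
  have hind : ∀ (v : ι) (ψ : ℝ × ℝ × ℝ × ℝ → ℝ), Measurable ψ →
      IndepFun ((Z ⁻¹' {v}).indicator (fun _ => (1:ℝ))) (fun ω => ψ (W ω)) μ := by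
    intro v ψ hψ
    have := hexo.comp (_mγ := Real.measurableSpace) (_mγ' := Real.measurableSpace)
      (φ := ({v} : Set ι).indicator (fun _ => (1:ℝ))) (ψ := ψ)
      (measurable_const.indicator (measurableSet_singleton v)) hψ
    rwa [show (({v} : Set ι).indicator (fun _ => (1:ℝ))) ∘ Z
        = (Z ⁻¹' {v}).indicator (fun _ => (1:ℝ)) from hindic v] at this
  -- pointwise identities for binary treatments
  have hDzInd : Dz = ({ω | Dz ω = 1} : Set Ω).indicator (fun _ => (1:ℝ)) := by
    funext ω; rcases (hbin ω).1 with h | h <;> simp [Set.indicator, h]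
  have hDz'Ind : Dz' = ({ω | Dz' ω = 1} : Set Ω).indicator (fun _ => (1:ℝ)) := by
    funext ω; rcases (hbin ω).2 with h | h <;> simp [Set.indicator, h]
  have hDz1m : MeasurableSet {ω | Dz ω = 1} := hDz (measurableSet_singleton 1)
  have hDz'1m : MeasurableSet {ω | Dz' ω = 1} := hDz' (measurableSet_singleton 1)
  -- integrability
  have hmulY1 : (fun ω => Dz ω * Y1 ω) = ({ω | Dz ω = 1} : Set Ω).indicator Y1 := by
    funext ω; rcases (hbin ω).1 with h | h <;> simp [Set.indicator, h]
  have hmulY0 : (fun ω => (1 - Dz ω) * Y0 ω) = ({ω | Dz ω = 0} : Set Ω).indicator Y0 := by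
    funext ω; rcases (hbin ω).1 with h | h <;> simp [Set.indicator, h]
  have hmulY1' : (fun ω => Dz' ω * Y1 ω) = ({ω | Dz' ω = 1} : Set Ω).indicator Y1 := by
    funext ω; rcases (hbin ω).2 with h | h <;> simp [Set.indicator, h]
  have hmulY0' : (fun ω => (1 - Dz' ω) * Y0 ω) = ({ω | Dz' ω = 0} : Set Ω).indicator Y0 := by
    funext ω; rcases (hbin ω).2 with h | h <;> simp [Set.indicator, h]
  have hg : Integrable (fun ω => Dz ω * Y1 ω + (1 - Dz ω) * Y0 ω) μ := by
    rw [show (fun ω => Dz ω * Y1 ω + (1 - Dz ω) * Y0 ω)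
        = (fun ω => Dz ω * Y1 ω) + (fun ω => (1 - Dz ω) * Y0 ω) from rfl, hmulY1, hmulY0]
    exact (hY1.indicator hDz1m).add (hY0.indicator (hDz (measurableSet_singleton 0)))
  have hg' : Integrable (fun ω => Dz' ω * Y1 ω + (1 - Dz' ω) * Y0 ω) μ := by
    rw [show (fun ω => Dz' ω * Y1 ω + (1 - Dz' ω) * Y0 ω)
        = (fun ω => Dz' ω * Y1 ω) + (fun ω => (1 - Dz' ω) * Y0 ω) from rfl, hmulY1', hmulY0']
    exact (hY1.indicator hDz'1m).add (hY0.indicator (hDz' (measurableSet_singleton 0)))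
  have hDzInt : Integrable Dz μ := by
    rw [hDzInd]; exact (integrable_const (1:ℝ)).indicator hDz1m
  have hDz'Int : Integrable Dz' μ := by
    rw [hDz'Ind]; exact (integrable_const (1:ℝ)).indicator hDz'1m
  -- expectations of binary treatments
  have hEDz : ∫ ω, Dz ω ∂μ = (μ {ω | Dz ω = 1}).toReal := by
    conv_lhs => rw [hDzInd]
    rw [integral_indicator hDz1m]; simp; rfl
  have hEDz' : ∫ ω, Dz' ω ∂μ = (μ {ω | Dz' ω = 1}).toReal := by
    conv_lhs => rw [hDz'Ind]
    rw [integral_indicator hDz'1m]; simp; rfl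
  -- E[Y | Z = z] computations
  have hEY : ∫ ω, Y ω ∂(μ[|A]) = ∫ ω, Dz ω * Y1 ω + (1 - Dz ω) * Y0 ω ∂μ := by
    have step1 : ∫ ω, Y ω ∂(μ[|A]) = ∫ ω, Dz ω * Y1 ω + (1 - Dz ω) * Y0 ω ∂(μ[|A]) := by
      rw [ProbabilityTheory.cond, integral_smul_measure, integral_smul_measure]
      congr 1
      refine setIntegral_congr_fun hAm fun ω hω => ?_
      rw [hYobs ω, hDlink ω hω]
    rw [step1]
    exact late_integral_cond_of_indep hAm hA0 hg.aestronglyMeasurable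
      (hind z (fun p => p.1 * p.2.2.1 + (1 - p.1) * p.2.2.2) (by fun_prop))
  have hEY' : ∫ ω, Y ω ∂(μ[|A']) = ∫ ω, Dz' ω * Y1 ω + (1 - Dz' ω) * Y0 ω ∂μ := by
    have step1 : ∫ ω, Y ω ∂(μ[|A']) = ∫ ω, Dz' ω * Y1 ω + (1 - Dz' ω) * Y0 ω ∂(μ[|A']) := by
      rw [ProbabilityTheory.cond, integral_smul_measure, integral_smul_measure]
      congr 1
      refine setIntegral_congr_fun hA'm fun ω hω => ?_
      rw [hYobs ω, hDlink' ω hω]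
    rw [step1]
    exact late_integral_cond_of_indep hA'm hA'0 hg'.aestronglyMeasurable
      (hind z' (fun p => p.2.1 * p.2.2.1 + (1 - p.2.1) * p.2.2.2) (by fun_prop))
  -- conditional treatment probabilities
  have hiff := indepFun_iff_measure_inter_preimage_eq_mul.mp hexo
  have hPD : (μ[|A] {ω | D ω = 1}).toReal = (μ {ω | Dz ω = 1}).toReal := by
    rw [cond_apply hAm]
    have hset : A ∩ {ω | D ω = 1} = A ∩ {ω | Dz ω = 1} := by
      ext ω; constructor
      · rintro ⟨h1, h2⟩
        exact ⟨h1, show Dz ω = 1 by rw [← hDlink ω h1]; exact h2⟩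
      · rintro ⟨h1, h2⟩
        exact ⟨h1, show D ω = 1 by rw [hDlink ω h1]; exact h2⟩
    have hpre : {ω | Dz ω = 1} = W ⁻¹' ({(1:ℝ)} ×ˢ (Set.univ : Set (ℝ × ℝ × ℝ))) := by
      ext ω; simp [hWdef, eq_comm]
    rw [hset, hpre, show A = Z ⁻¹' {z} from rfl,
      hiff {z} ({(1:ℝ)} ×ˢ Set.univ) (measurableSet_singleton z)
        ((measurableSet_singleton (1:ℝ)).prod MeasurableSet.univ),
      ← mul_assoc, ENNReal.inv_mul_cancel hA0 (measure_ne_top μ _), one_mul]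
  have hPD' : (μ[|A'] {ω | D ω = 1}).toReal = (μ {ω | Dz' ω = 1}).toReal := by
    rw [cond_apply hA'm]
    have hset : A' ∩ {ω | D ω = 1} = A' ∩ {ω | Dz' ω = 1} := by
      ext ω; constructor
      · rintro ⟨h1, h2⟩
        exact ⟨h1, show Dz' ω = 1 by rw [← hDlink' ω h1]; exact h2⟩
      · rintro ⟨h1, h2⟩
        exact ⟨h1, show D ω = 1 by rw [hDlink' ω h1]; exact h2⟩
    have hpre : {ω | Dz' ω = 1} = W ⁻¹' ((Set.univ : Set ℝ) ×ˢ ({(1:ℝ)} ×ˢ (Set.univ : Set (ℝ × ℝ)))) := by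
      ext ω; simp [hWdef, eq_comm]
    rw [hset, hpre, show A' = Z ⁻¹' {z'} from rfl,
      hiff {z'} (Set.univ ×ˢ ({(1:ℝ)} ×ˢ Set.univ)) (measurableSet_singleton z')
        (MeasurableSet.univ.prod ((measurableSet_singleton (1:ℝ)).prod MeasurableSet.univ)),
      ← mul_assoc, ENNReal.inv_mul_cancel hA'0 (measure_ne_top μ _), one_mul]
  -- first stage in terms of potential treatments
  have hED : ∫ ω, D ω ∂(μ[|A]) = (μ {ω | Dz ω = 1}).toReal := by
    have step1 : ∫ ω, D ω ∂(μ[|A]) = ∫ ω, Dz ω ∂(μ[|A]) := by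
      rw [ProbabilityTheory.cond, integral_smul_measure, integral_smul_measure]
      congr 1
      exact setIntegral_congr_fun hAm fun ω hω => hDlink ω hω
    rw [step1, late_integral_cond_of_indep hAm hA0 hDzInt.aestronglyMeasurable
      (hind z (fun p => p.1) (by fun_prop)), hEDz]
  have hED' : ∫ ω, D ω ∂(μ[|A']) = (μ {ω | Dz' ω = 1}).toReal := by
    have step1 : ∫ ω, D ω ∂(μ[|A']) = ∫ ω, Dz' ω ∂(μ[|A']) := by
      rw [ProbabilityTheory.cond, integral_smul_measure, integral_smul_measure]
      congr 1
      exact setIntegral_congr_fun hA'm fun ω hω => hDlink' ω hω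
    rw [step1, late_integral_cond_of_indep hA'm hA'0 hDz'Int.aestronglyMeasurable
      (hind z' (fun p => p.2.1) (by fun_prop)), hEDz']
  -- complier identity: Dz - Dz' = indicator of C (a.e.)
  have hcompl : ∀ᵐ ω ∂μ, Dz ω - Dz' ω = C.indicator (fun _ => (1:ℝ)) ω := by
    filter_upwards [hmono] with ω hω
    rcases (hbin ω).1 with h1 | h1 <;> rcases (hbin ω).2 with h2 | h2 <;>
      simp only [Set.indicator, hCdef, Set.mem_setOf_eq, h1, h2] <;> norm_num
    rw [h1, h2] at hω; linarith
  -- denominator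
  have hden : (μ {ω | Dz ω = 1}).toReal - (μ {ω | Dz' ω = 1}).toReal = (μ C).toReal := by
    rw [← hEDz, ← hEDz', ← integral_sub hDzInt hDz'Int,
      integral_congr_ae hcompl, integral_indicator hCm]
    simp; rfl
  -- numerator
  have hnum : (∫ ω, Dz ω * Y1 ω + (1 - Dz ω) * Y0 ω ∂μ)
      - (∫ ω, Dz' ω * Y1 ω + (1 - Dz' ω) * Y0 ω ∂μ)
      = ∫ ω in C, (Y1 ω - Y0 ω) ∂μ := by
    rw [← integral_sub hg hg', ← integral_indicator hCm]
    refine integral_congr_ae ?_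
    filter_upwards [hcompl] with ω hω
    have : Dz ω * Y1 ω + (1 - Dz ω) * Y0 ω - (Dz' ω * Y1 ω + (1 - Dz' ω) * Y0 ω)
        = (Dz ω - Dz' ω) * (Y1 ω - Y0 ω) := by ring
    rw [this, hω]
    by_cases h : ω ∈ C <;> simp [Set.indicator, h]
  -- complier group has positive probability
  have hC0 : μ C ≠ 0 := by
    intro h0
    apply hfs
    rw [hED, hED']
    have : (μ {ω | Dz ω = 1}).toReal - (μ {ω | Dz' ω = 1}).toReal = 0 := by
      rw [hden, h0]; simp
    linarith [this]
  -- conclude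
  rw [hEY, hEY', hPD, hPD', hnum, hden, ProbabilityTheory.cond, integral_smul_measure,
    ENNReal.toReal_inv, smul_eq_mul, div_eq_inv_mul]
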